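/- arXiv:2009.13241 — 2 statements merged into one kernel-verified Lean document; each statement's English description precedes it below -/
import Mathlib

section
/- Let (P,σ) be a Markov operator cocycle, S the closed unit ball of L^∞(X,m), and fix ω ∈ Ω. If f ∈ L^1(X,m) satisfies ∫_X f g dm = 0 for every g ∈ ⋂_{n≥1} P_ω^{*(n)} S, then ‖P_ω^{(n)} f‖_{L^1} → 0 as n → ∞. -/
open MeasureTheory Filter Topology

/-- The cocycle `P_ω^{(n)} = P_{σ^{n-1}ω} ∘ ⋯ ∘ P_ω` generated by a family of
operators over the driving system `σ`. -/
noncomputable def coc {Ω M : Type*} [Monoid M] (P : Ω → M) (σ : Ω → Ω) : ℕ → Ω → M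
  | 0, _ => 1
  | n + 1, ω => P (σ^[n] ω) * coc P σ n ω

/-- The dual cocycle `P_ω^{*(n)} = P_ω^* ∘ P_{σω}^* ∘ ⋯ ∘ P_{σ^{n-1}ω}^*`. -/
noncomputable def dcoc {Ω M : Type*} [Monoid M] (Ps : Ω → M) (σ : Ω → Ω) : ℕ → Ω → M
  | 0, _ => 1
  | n + 1, ω => Ps ω * dcoc Ps σ n (σ ω)

open scoped ENNReal NNReal

lemma coc_succ' {Ω M : Type*} [Monoid M] (P : Ω → M) (σ : Ω → Ω) (n : ℕ) (ω : Ω) :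
    coc P σ (n + 1) ω = coc P σ n (σ ω) * P ω := by
  induction n generalizing ω with
  | zero => simp [coc]
  | succ n ih =>
    have : σ^[n+1] ω = σ^[n] (σ ω) := Function.iterate_succ_apply σ n ω
    rw [show n + 1 + 1 = (n+1) + 1 from rfl, coc, ih ω, coc, this, mul_assoc]

lemma dcoc_add {Ω M : Type*} [Monoid M] (Ps : Ω → M) (σ : Ω → Ω) (k j : ℕ) (ω : Ω) :
    dcoc Ps σ (k + j) ω = dcoc Ps σ k ω * dcoc Ps σ j (σ^[k] ω) := by
  induction k generalizing ω with
  | zero => simp [dcoc]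
  | succ k ih =>
    have : σ^[k+1] ω = σ^[k] (σ ω) := Function.iterate_succ_apply σ k ω
    rw [show k + 1 + j = (k + j) + 1 from by omega, dcoc, ih (σ ω), dcoc, this, mul_assoc]

section Pairing

variable {X : Type*} [MeasurableSpace X] {m : Measure X} [IsProbabilityMeasure m]

lemma Linf.ae_bound (g : Lp ℝ ⊤ m) : ∀ᵐ x ∂m, |g x| ≤ ‖g‖ := by
  have h := ae_le_eLpNormEssSup (f := (g : X → ℝ)) (μ := m)
  have hlt : eLpNormEssSup (g : X → ℝ) m < ⊤ := by
    have := Lp.eLpNorm_lt_top g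
    rwa [eLpNorm_exponent_top] at this
  filter_upwards [h] with x hx
  have h2 : ((‖(g : X → ℝ) x‖₊ : ℝ≥0∞)).toReal ≤ (eLpNormEssSup (g : X → ℝ) m).toReal :=
    ENNReal.toReal_mono hlt.ne hx
  simpa [Lp.norm_def, eLpNorm_exponent_top, Real.norm_eq_abs] using h2

lemma pair_integrable (u : Lp ℝ 1 m) (g : Lp ℝ ⊤ m) :
    Integrable (fun x => u x * g x) m := by
  have := (L1.integrable_coeFn u).bdd_mul (Lp.aestronglyMeasurable g)
    (by filter_upwards [Linf.ae_bound g] with x hx; simpa [Real.norm_eq_abs] using hx)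
  simpa [mul_comm] using this

lemma pair_abs_le (u : Lp ℝ 1 m) (g : Lp ℝ ⊤ m) :
    |∫ x, u x * g x ∂m| ≤ ‖u‖ * ‖g‖ := by
  have h1 : |∫ x, u x * g x ∂m| ≤ ∫ x, |u x * g x| ∂m := by
    simpa [Real.norm_eq_abs, abs_mul] using
      norm_integral_le_integral_norm (μ := m) (f := fun x => u x * g x)
  refine h1.trans ?_
  have h2 : ∫ x, |u x * g x| ∂m ≤ ∫ x, |u x| * ‖g‖ ∂m := by
    refine integral_mono_ae ((pair_integrable u g).abs) ((L1.integrable_coeFn u).abs.mul_const _) ?_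
    filter_upwards [Linf.ae_bound g] with x hx
    rw [abs_mul]
    exact mul_le_mul_of_nonneg_left hx (abs_nonneg _)
  refine h2.trans ?_
  rw [integral_mul_const]
  have : ∫ x, |u x| ∂m = ‖u‖ := by
    rw [L1.norm_eq_integral_norm]; simp [Real.norm_eq_abs]
  rw [this]

lemma pair_add (u v : Lp ℝ 1 m) (g : Lp ℝ ⊤ m) :
    ∫ x, (u + v) x * g x ∂m = ∫ x, u x * g x ∂m + ∫ x, v x * g x ∂m := by
  rw [← integral_add (pair_integrable u g) (pair_integrable v g)]
  refine integral_congr_ae ?_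
  filter_upwards [Lp.coeFn_add u v] with x hx
  rw [hx]; simp only [Pi.add_apply]; ring

lemma pair_smul (c : ℝ) (u : Lp ℝ 1 m) (g : Lp ℝ ⊤ m) :
    ∫ x, (c • u) x * g x ∂m = c * ∫ x, u x * g x ∂m := by
  rw [← integral_const_mul]
  refine integral_congr_ae ?_
  filter_upwards [Lp.coeFn_smul c u] with x hx
  rw [hx]; simp; ring

end Pairing

section Markov

set_option linter.unusedSectionVars false

variable {X : Type*} [MeasurableSpace X] {m : Measure X} [IsProbabilityMeasure m]

lemma markov_contraction (Q : Module.End ℝ (Lp ℝ 1 m))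
    (hpos : ∀ f : Lp ℝ 1 m, 0 ≤ f → 0 ≤ Q f)
    (hint : ∀ f : Lp ℝ 1 m, ∫ x, (Q f) x ∂m = ∫ x, f x ∂m)
    (u : Lp ℝ 1 m) : ‖Q u‖ ≤ ‖u‖ := by
  have h1 : Q u ≤ Q |u| := by
    have := hpos (|u| - u) (by rw [sub_nonneg]; exact le_abs_self u)
    rw [map_sub, sub_nonneg] at this
    exact this
  have h2 : -(Q u) ≤ Q |u| := by
    have h0 : (0 : Lp ℝ 1 m) ≤ |u| + u := by
      have := sub_nonneg.2 (neg_le_abs u)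
      rwa [sub_neg_eq_add] at this
    have hq := hpos (|u| + u) h0
    rw [map_add] at hq
    have hq' : (0 : Lp ℝ 1 m) ≤ Q |u| - -(Q u) := by
      rwa [sub_neg_eq_add]
    exact sub_nonneg.1 hq'
  have habs : |Q u| ≤ Q |u| := abs_le'.2 ⟨h1, h2⟩
  have hae : ∀ᵐ x ∂m, |(Q u) x| ≤ (Q |u|) x := by
    have hle := (Lp.coeFn_le _ _).2 habs
    filter_upwards [hle, Lp.coeFn_abs (Q u)] with x hx habsx
    rw [← habsx]; exact hx
  calc ‖Q u‖ = ∫ x, |(Q u) x| ∂m := by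
        rw [L1.norm_eq_integral_norm]; simp [Real.norm_eq_abs]
    _ ≤ ∫ x, (Q |u|) x ∂m :=
        integral_mono_ae (L1.integrable_coeFn (Q u)).abs (L1.integrable_coeFn _) hae
    _ = ∫ x, (|u| : Lp ℝ 1 m) x ∂m := hint _
    _ = ∫ x, |u x| ∂m := integral_congr_ae (Lp.coeFn_abs u)
    _ = ‖u‖ := by rw [L1.norm_eq_integral_norm]; simp [Real.norm_eq_abs]

end Markov

lemma measurable_realSign : Measurable Real.sign := by
  have h : Real.sign = fun r : ℝ => if r < 0 then (-1 : ℝ) else if 0 < r then 1 else 0 := by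
    funext r; rw [Real.sign]
  rw [h]
  exact Measurable.ite (measurableSet_lt measurable_id measurable_const) measurable_const
    (Measurable.ite (measurableSet_lt measurable_const measurable_id) measurable_const
      measurable_const)

lemma real_mul_sign (r : ℝ) : r * Real.sign r = |r| := by
  rcases lt_trichotomy r 0 with h | h | h
  · rw [Real.sign_of_neg h, abs_of_neg h]; ring
  · simp [h]
  · rw [Real.sign_of_pos h, abs_of_pos h]; ring

lemma abs_sign_le_one (r : ℝ) : |Real.sign r| ≤ 1 := by
  rcases lt_trichotomy r 0 with h | h | h <;>
    simp [Real.sign_of_neg, Real.sign_of_pos, h]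

section Sgn

set_option linter.unusedSectionVars false

variable {X : Type*} [MeasurableSpace X] {m : Measure X} [IsProbabilityMeasure m]

lemma exists_sgn (v : Lp ℝ 1 m) :
    ∃ g : Lp ℝ ⊤ m, ‖g‖ ≤ 1 ∧ ∫ x, v x * g x ∂m = ‖v‖ := by
  set s : X → ℝ := fun x => Real.sign (v x) with hs
  have hmeas : AEStronglyMeasurable s m :=
    (measurable_realSign.comp_aemeasurable
      (Lp.aestronglyMeasurable v).aemeasurable).aestronglyMeasurable
  have hbd : ∀ x, ‖s x‖ ≤ 1 := fun x => by
    simpa [hs, Real.norm_eq_abs] using abs_sign_le_one (v x)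
  have hmem : MemLp s ⊤ m := memLp_top_of_bound hmeas 1 (ae_of_all _ hbd)
  refine ⟨hmem.toLp s, ?_, ?_⟩
  · have hb : ‖hmem.toLp s‖ ≤ (measureUnivNNReal m : ℝ) ^ (⊤ : ℝ≥0∞).toReal⁻¹ * 1 := by
      refine Lp.norm_le_of_ae_bound (f := hmem.toLp s) (C := 1) one_pos.le ?_
      filter_upwards [hmem.coeFn_toLp] with x hx
      rw [hx]; exact hbd x
    simpa using hb
  · have h1 : ∫ x, v x * (hmem.toLp s) x ∂m = ∫ x, |v x| ∂m := by
      refine integral_congr_ae ?_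
      filter_upwards [hmem.coeFn_toLp] with x hx
      rw [hx]; exact real_mul_sign (v x)
    rw [h1, L1.norm_eq_integral_norm]
    simp [Real.norm_eq_abs]

end Sgn

section Cocycle

set_option linter.unusedSectionVars false

variable {X : Type*} [MeasurableSpace X] {m : Measure X} [IsProbabilityMeasure m]
variable {Ω : Type*}

lemma dcoc_norm_le (Ps : Ω → Module.End ℝ (Lp ℝ ⊤ m)) (σ : Ω → Ω)
    (hcontr : ∀ (ω : Ω) (g : Lp ℝ ⊤ m), ‖Ps ω g‖ ≤ ‖g‖) :
    ∀ (n : ℕ) (ω : Ω) (g : Lp ℝ ⊤ m), ‖(dcoc Ps σ n ω) g‖ ≤ ‖g‖ := by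
  intro n
  induction n with
  | zero => intro ω g; simp [dcoc, Module.End.one_apply]
  | succ n ih =>
    intro ω g
    rw [dcoc, Module.End.mul_apply]
    exact (hcontr ω _).trans (ih (σ ω) g)

lemma pair_coc (P : Ω → Module.End ℝ (Lp ℝ 1 m)) (Ps : Ω → Module.End ℝ (Lp ℝ ⊤ m))
    (σ : Ω → Ω)
    (hdual : ∀ (ω : Ω) (f : Lp ℝ 1 m) (g : Lp ℝ ⊤ m),
      ∫ x, (P ω f) x * g x ∂m = ∫ x, f x * (Ps ω g) x ∂m) :
    ∀ (n : ℕ) (ω : Ω) (u : Lp ℝ 1 m) (g : Lp ℝ ⊤ m),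
      ∫ x, (coc P σ n ω u) x * g x ∂m = ∫ x, u x * (dcoc Ps σ n ω g) x ∂m := by
  intro n
  induction n with
  | zero => intro ω u g; simp [coc, dcoc, Module.End.one_apply]
  | succ n ih =>
    intro ω u g
    rw [coc_succ', Module.End.mul_apply, ih (σ ω) (P ω u) g, hdual ω u _,
      show dcoc Ps σ (n + 1) ω = Ps ω * dcoc Ps σ n (σ ω) from rfl, Module.End.mul_apply]

end Cocycle

section Rep

set_option linter.unusedSectionVars false

variable {X : Type*} [MeasurableSpace X] {m : Measure X} [IsProbabilityMeasure m]

lemma pair_sub (u v : Lp ℝ 1 m) (g : Lp ℝ ⊤ m) :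
    ∫ x, (u - v) x * g x ∂m = ∫ x, u x * g x ∂m - ∫ x, v x * g x ∂m := by
  have h : u - v = u + (-1 : ℝ) • v := by
    rw [neg_one_smul]; abel
  rw [h, pair_add, pair_smul]; ring

lemma pair_ext (g₁ g₂ : Lp ℝ ⊤ m)
    (h : ∀ u : Lp ℝ 1 m, ∫ x, u x * g₁ x ∂m = ∫ x, u x * g₂ x ∂m) : g₁ = g₂ := by
  have hint : ∀ g : Lp ℝ ⊤ m, Integrable (g : X → ℝ) m := fun g =>
    memLp_one_iff_integrable.1 ((Lp.memLp g).mono_exponent le_top)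
  have hset : ∀ s, MeasurableSet s → m s < ⊤ →
      ∫ x in s, g₁ x ∂m = ∫ x in s, g₂ x ∂m := by
    intro s hs _
    have hms : m s ≠ ⊤ := (measure_lt_top m s).ne
    set u : Lp ℝ 1 m := indicatorConstLp 1 hs hms (1 : ℝ) with hu
    have key : ∀ g : Lp ℝ ⊤ m, ∫ x, u x * g x ∂m = ∫ x in s, g x ∂m := by
      intro g
      rw [← integral_indicator hs]
      refine integral_congr_ae ?_
      filter_upwards [indicatorConstLp_coeFn (p := 1) (hs := hs) (hμs := hms) (c := (1 : ℝ))]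
        with x hx
      rw [hu, hx]
      by_cases hxs : x ∈ s <;> simp [Set.indicator, hxs]
    rw [← key g₁, ← key g₂, h u]
  have hae : (g₁ : X → ℝ) =ᵐ[m] g₂ :=
    ae_eq_of_forall_setIntegral_eq_of_sigmaFinite
      (fun s _ _ => (hint g₁).integrableOn) (fun s _ _ => (hint g₂).integrableOn) hset
  exact Lp.ext hae

lemma rep_lemma (Λ : Lp ℝ 1 m → ℝ)
    (hadd : ∀ u v, Λ (u + v) = Λ u + Λ v)
    (hsmul : ∀ (c : ℝ) (u), Λ (c • u) = c * Λ u)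
    (hbd : ∀ u, |Λ u| ≤ ‖u‖) :
    ∃ g : Lp ℝ ⊤ m, ‖g‖ ≤ 1 ∧ ∀ u, Λ u = ∫ x, u x * g x ∂m := by
  have hle : (1 : ℝ≥0∞) ≤ 2 := one_le_two
  -- the inclusion L² → L¹
  have jm : ∀ w : Lp ℝ 2 m, MemLp (w : X → ℝ) 1 m := fun w =>
    (Lp.memLp w).mono_exponent hle
  set j : Lp ℝ 2 m → Lp ℝ 1 m := fun w => (jm w).toLp w with hj
  have hj_coe : ∀ w, (j w : X → ℝ) =ᵐ[m] w := fun w => (jm w).coeFn_toLp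
  have hj_norm : ∀ w, ‖j w‖ ≤ ‖w‖ := by
    intro w
    rw [Lp.norm_def, Lp.norm_def]
    refine ENNReal.toReal_mono (Lp.eLpNorm_ne_top w) ?_
    rw [eLpNorm_congr_ae (hj_coe w)]
    exact eLpNorm_le_eLpNorm_of_exponent_le hle (Lp.aestronglyMeasurable w)
  have hj_add : ∀ w w', j (w + w') = j w + j w' := by
    intro w w'
    refine Lp.ext ?_
    filter_upwards [hj_coe (w + w'), hj_coe w, hj_coe w', Lp.coeFn_add w w',
      Lp.coeFn_add (j w) (j w')] with x h1 h2 h3 h4 h5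
    rw [h1, h4, h5, Pi.add_apply, Pi.add_apply, h2, h3]
  have hj_smul : ∀ (c : ℝ) (w), j (c • w) = c • j w := by
    intro c w
    refine Lp.ext ?_
    filter_upwards [hj_coe (c • w), hj_coe w, Lp.coeFn_smul c w,
      Lp.coeFn_smul c (j w)] with x h1 h2 h3 h4
    rw [h1, h3, h4, Pi.smul_apply, Pi.smul_apply, h2]
  -- the functional on L²
  set Λ₂ : Lp ℝ 2 m →L[ℝ] ℝ := LinearMap.mkContinuous
    { toFun := fun w => Λ (j w)
      map_add' := fun w w' => by
        show Λ (j (w + w')) = Λ (j w) + Λ (j w')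
        rw [hj_add, hadd]
      map_smul' := fun c w => by
        show Λ (j (c • w)) = c • Λ (j w)
        rw [hj_smul, hsmul]; rfl } 1
    (fun w => by
      simpa [Real.norm_eq_abs] using (hbd (j w)).trans (hj_norm w)) with hΛ₂
  -- Riesz representation
  obtain ⟨w₀, hw₀⟩ := (InnerProductSpace.toDual ℝ (Lp ℝ 2 m)).surjective Λ₂
  have hw₀app : ∀ w, Λ (j w) = ∫ x, w₀ x * w x ∂m := by
    intro w
    have h1 : @inner ℝ _ _ w₀ w = Λ₂ w := by rw [← hw₀, InnerProductSpace.toDual_apply_apply]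
    have h2 : @inner ℝ _ _ w₀ w = ∫ x, w₀ x * w x ∂m := by
      rw [L2.inner_def]
      refine integral_congr_ae (ae_of_all _ fun x => ?_)
      simp [RCLike.inner_apply]; ring
    rw [← h2, h1]
    rfl
  -- essential bound for w₀
  have hw₀int : Integrable (w₀ : X → ℝ) m := memLp_one_iff_integrable.1 (jm w₀)
  have key : ∀ s : Set X, MeasurableSet s → |∫ x in s, w₀ x ∂m| ≤ (m s).toReal := by
    intro s hs
    have hms : m s ≠ ⊤ := (measure_lt_top m s).ne
    set w : Lp ℝ 2 m := indicatorConstLp 2 hs hms (1 : ℝ) with hw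
    have hw_coe : (w : X → ℝ) =ᵐ[m] s.indicator fun _ => 1 := indicatorConstLp_coeFn
    have h1 : Λ (j w) = ∫ x in s, w₀ x ∂m := by
      rw [hw₀app w, ← integral_indicator hs]
      refine integral_congr_ae ?_
      filter_upwards [hw_coe] with x hx
      rw [hx]
      by_cases hxs : x ∈ s <;> simp [Set.indicator, hxs]
    have h2 : ‖j w‖ = (m s).toReal := by
      rw [L1.norm_eq_integral_norm]
      have : ∫ x, ‖(j w) x‖ ∂m = ∫ x, s.indicator (fun _ => (1 : ℝ)) x ∂m := by
        refine integral_congr_ae ?_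
        filter_upwards [hj_coe w, hw_coe] with x ha hb
        rw [ha, hb]
        by_cases hxs : x ∈ s <;> simp [Set.indicator, hxs]
      rw [this, integral_indicator_const _ hs]
      simp [Measure.real]
    rw [← h1]
    exact (hbd (j w)).trans h2.le
  have hW_le : (w₀ : X → ℝ) ≤ᵐ[m] fun _ => (1 : ℝ) := by
    refine ae_le_of_forall_setIntegral_le hw₀int (integrable_const 1) ?_
    intro s hs _
    have := (abs_le.1 (key s hs)).2
    calc ∫ x in s, w₀ x ∂m ≤ (m s).toReal := this
      _ = ∫ _ in s, (1 : ℝ) ∂m := by rw [setIntegral_const]; simp [Measure.real]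
  have hW_ge : (fun _ => (-1 : ℝ)) ≤ᵐ[m] (w₀ : X → ℝ) := by
    refine ae_le_of_forall_setIntegral_le (integrable_const (-1)) hw₀int ?_
    intro s hs _
    have := (abs_le.1 (key s hs)).1
    calc ∫ _ in s, (-1 : ℝ) ∂m = -(m s).toReal := by rw [setIntegral_const]; simp [Measure.real]
      _ ≤ ∫ x in s, w₀ x ∂m := this
  have hw₀bd : ∀ᵐ x ∂m, ‖(w₀ : X → ℝ) x‖ ≤ 1 := by
    filter_upwards [hW_le, hW_ge] with x h1 h2
    rw [Real.norm_eq_abs, abs_le]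
    exact ⟨h2, h1⟩
  -- the representing element of L∞
  have hmem : MemLp (w₀ : X → ℝ) ⊤ m :=
    memLp_top_of_bound (Lp.aestronglyMeasurable w₀) 1 hw₀bd
  set g : Lp ℝ ⊤ m := hmem.toLp w₀ with hg
  have hg_coe : (g : X → ℝ) =ᵐ[m] w₀ := hmem.coeFn_toLp
  have hg_norm : ‖g‖ ≤ 1 := by
    have hb : ‖g‖ ≤ (measureUnivNNReal m : ℝ) ^ (⊤ : ℝ≥0∞).toReal⁻¹ * 1 := by
      refine Lp.norm_le_of_ae_bound (f := g) (C := 1) one_pos.le ?_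
      filter_upwards [hg_coe, hw₀bd] with x hx h1
      rw [hx]; exact h1
    simpa using hb
  refine ⟨g, hg_norm, ?_⟩
  -- both sides agree on simple functions and are continuous
  have hcontΛ : Continuous Λ := by
    have hsub : ∀ u v, Λ (u - v) = Λ u - Λ v := by
      intro u v
      have : Λ ((u - v) + v) = Λ (u - v) + Λ v := hadd _ _
      rw [sub_add_cancel] at this
      linarith
    refine (LipschitzWith.of_dist_le_mul (K := 1) fun u v => ?_).continuous
    rw [Real.dist_eq, ← hsub, dist_eq_norm]
    simpa using hbd (u - v)
  have hcontI : Continuous fun u : Lp ℝ 1 m => ∫ x, u x * g x ∂m := by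
    refine (LipschitzWith.of_dist_le_mul (K := ‖g‖₊) fun u v => ?_).continuous
    rw [Real.dist_eq, ← pair_sub, dist_eq_norm]
    calc |∫ x, (u - v) x * g x ∂m| ≤ ‖u - v‖ * ‖g‖ := pair_abs_le _ _
      _ = ‖g‖₊ * ‖u - v‖ := by rw [mul_comm]; rfl
  have heq : (fun u : Lp ℝ 1 m => Λ u) = fun u => ∫ x, u x * g x ∂m := by
    refine Continuous.ext_on (Lp.simpleFunc.denseRange (E := ℝ) (μ := m)
      (p := 1) ENNReal.one_ne_top) hcontΛ hcontI ?_
    rintro _ ⟨us, rfl⟩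
    -- a simple function in L¹ is in L²
    obtain ⟨C, hC⟩ := (Lp.simpleFunc.toSimpleFunc us).exists_forall_norm_le
    have hmem2 : MemLp ((us : Lp ℝ 1 m) : X → ℝ) 2 m := by
      refine MemLp.of_bound (Lp.aestronglyMeasurable _) (max C 0) ?_
      filter_upwards [Lp.simpleFunc.toSimpleFunc_eq_toFun us] with x hx
      rw [← hx]
      exact (hC x).trans (le_max_left _ _)
    set w : Lp ℝ 2 m := hmem2.toLp _ with hwdef
    have hw_coe : (w : X → ℝ) =ᵐ[m] (us : Lp ℝ 1 m) := hmem2.coeFn_toLp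
    have hjw : j w = (us : Lp ℝ 1 m) := by
      refine Lp.ext ?_
      exact (hj_coe w).trans hw_coe
    calc Λ ↑us = Λ (j w) := by rw [hjw]
      _ = ∫ x, w₀ x * w x ∂m := hw₀app w
      _ = ∫ x, (us : Lp ℝ 1 m) x * g x ∂m := by
          refine integral_congr_ae ?_
          filter_upwards [hw_coe, hg_coe] with x h1 h2
          rw [h1, h2]; ring
  exact fun u => congrFun heq u

end Rep

section Ulim

open scoped Classical in
noncomputable def ulim (U : Ultrafilter ℕ) (s : ℕ → ℝ) : ℝ :=
  if h : ∃ l, Tendsto s (U : Filter ℕ) (𝓝 l) then h.choose else 0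

lemma ulim_spec {U : Ultrafilter ℕ} {s : ℕ → ℝ} (h : ∃ l, Tendsto s (U : Filter ℕ) (𝓝 l)) :
    Tendsto s (U : Filter ℕ) (𝓝 (ulim U s)) := by
  classical
  rw [ulim, dif_pos h]; exact h.choose_spec

lemma ulim_exists {U : Ultrafilter ℕ} {s : ℕ → ℝ} {C : ℝ} (hC : ∀ n, |s n| ≤ C) :
    ∃ l, Tendsto s (U : Filter ℕ) (𝓝 l) := by
  have hcpt : IsCompact (Set.Icc (-C) C) := isCompact_Icc
  have hle : (Ultrafilter.map s U : Filter ℝ) ≤ 𝓟 (Set.Icc (-C) C) := by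
    rw [le_principal_iff]
    exact Filter.mem_map.2 (Filter.univ_mem' fun n => abs_le.1 (hC n))
  obtain ⟨l, -, hl⟩ := hcpt.ultrafilter_le_nhds (Ultrafilter.map s U) hle
  exact ⟨l, hl⟩

lemma ulim_eq {U : Ultrafilter ℕ} {s : ℕ → ℝ} {l : ℝ}
    (h : Tendsto s (U : Filter ℕ) (𝓝 l)) : ulim U s = l :=
  tendsto_nhds_unique (ulim_spec ⟨l, h⟩) h

end Ulim

section LimitFunctional

set_option linter.unusedSectionVars false

variable {X : Type*} [MeasurableSpace X] {m : Measure X} [IsProbabilityMeasure m]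

lemma limit_functional (U : Ultrafilter ℕ) (hseq : ℕ → Lp ℝ ⊤ m)
    (hn : ∀ n, ‖hseq n‖ ≤ 1) :
    ∃ g : Lp ℝ ⊤ m, ‖g‖ ≤ 1 ∧ ∀ u : Lp ℝ 1 m,
      Tendsto (fun n => ∫ x, u x * (hseq n) x ∂m) (U : Filter ℕ)
        (𝓝 (∫ x, u x * g x ∂m)) := by
  set Λ : Lp ℝ 1 m → ℝ := fun u => ulim U fun n => ∫ x, u x * (hseq n) x ∂m with hΛ
  have hb : ∀ (u : Lp ℝ 1 m) (n : ℕ), |∫ x, u x * (hseq n) x ∂m| ≤ ‖u‖ := by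
    intro u n
    refine (pair_abs_le u (hseq n)).trans ?_
    calc ‖u‖ * ‖hseq n‖ ≤ ‖u‖ * 1 := by
          exact mul_le_mul_of_nonneg_left (hn n) (norm_nonneg u)
      _ = ‖u‖ := mul_one _
  have hΛt : ∀ u : Lp ℝ 1 m,
      Tendsto (fun n => ∫ x, u x * (hseq n) x ∂m) (U : Filter ℕ) (𝓝 (Λ u)) :=
    fun u => ulim_spec (ulim_exists (hb u))
  have hadd : ∀ u v, Λ (u + v) = Λ u + Λ v := by
    intro u v
    refine ulim_eq (((hΛt u).add (hΛt v)).congr fun n => ?_)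
    rw [pair_add]
  have hsmul : ∀ (c : ℝ) u, Λ (c • u) = c * Λ u := by
    intro c u
    refine ulim_eq (((hΛt u).const_mul c).congr fun n => ?_)
    rw [pair_smul]
  have hbd : ∀ u, |Λ u| ≤ ‖u‖ := fun u =>
    le_of_tendsto (hΛt u).abs (Filter.Eventually.of_forall (hb u))
  obtain ⟨g, hg1, hg2⟩ := rep_lemma Λ hadd hsmul hbd
  exact ⟨g, hg1, fun u => (hg2 u) ▸ hΛt u⟩

end LimitFunctional


/-- (Lin's criterion, hard direction, for Markov operator cocycles.) Fix `ω`.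
If `f ∈ L¹` satisfies `∫ f g dm = 0` for every `g ∈ ⋂_{n≥1} P_ω^{*(n)} S`
(`S` the unit ball of `L^∞`), then `‖P_ω^{(n)} f‖₁ → 0`. -/
theorem lin_criterion_sufficiency
    {X : Type*} [MeasurableSpace X] (m : Measure X) [IsProbabilityMeasure m]
    {Ω : Type*} [MeasurableSpace Ω] (Pr : Measure Ω) [IsProbabilityMeasure Pr]
    (σ : Ω → Ω) (hσ : MeasurePreserving σ Pr Pr)
    (P : Ω → Module.End ℝ (Lp ℝ 1 m))
    (hP : ∀ ω, (∀ f : Lp ℝ 1 m, 0 ≤ f → 0 ≤ P ω f) ∧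
      ∀ f : Lp ℝ 1 m, ∫ x, (P ω f) x ∂m = ∫ x, f x ∂m)
    (Ps : Ω → Module.End ℝ (Lp ℝ ⊤ m))
    (hdual : ∀ (ω : Ω) (f : Lp ℝ 1 m) (g : Lp ℝ ⊤ m),
      ∫ x, (P ω f) x * g x ∂m = ∫ x, f x * (Ps ω g) x ∂m)
    (hcontr : ∀ (ω : Ω) (g : Lp ℝ ⊤ m), ‖Ps ω g‖ ≤ ‖g‖)
    (ω : Ω) (f : Lp ℝ 1 m)
    (hf : ∀ g ∈ ⋂ n : ℕ, ⇑(dcoc Ps σ (n + 1) ω) '' {u : Lp ℝ ⊤ m | ‖u‖ ≤ 1},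
      ∫ x, f x * g x ∂m = 0) :
    Tendsto (fun n => ‖coc P σ n ω f‖) atTop (𝓝 0) := by
  classical
  set a : ℕ → ℝ := fun n => ‖coc P σ n ω f‖ with ha
  have ha_anti : Antitone a := by
    refine antitone_nat_of_succ_le fun n => ?_
    have hc : coc P σ (n + 1) ω f = P (σ^[n] ω) (coc P σ n ω f) := by
      rw [show coc P σ (n + 1) ω = P (σ^[n] ω) * coc P σ n ω from rfl, Module.End.mul_apply]
    show ‖coc P σ (n + 1) ω f‖ ≤ ‖coc P σ n ω f‖
    rw [hc]
    exact markov_contraction _ (hP _).1 (hP _).2 _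
  have ha_nonneg : ∀ n, 0 ≤ a n := fun n => norm_nonneg _
  set L := ⨅ n, a n with hL
  have htend : Tendsto a atTop (𝓝 L) :=
    tendsto_atTop_ciInf ha_anti ⟨0, by rintro x ⟨n, rfl⟩; exact ha_nonneg n⟩
  -- sign functions
  have hsgn : ∀ n, ∃ g : Lp ℝ ⊤ m, ‖g‖ ≤ 1 ∧
      ∫ x, (coc P σ n ω f) x * g x ∂m = a n := fun n => exists_sgn _
  choose gs hgs1 hgs2 using hsgn
  set hfun : ℕ → Lp ℝ ⊤ m := fun n => dcoc Ps σ n ω (gs n) with hhdef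
  have hh_norm : ∀ n, ‖hfun n‖ ≤ 1 := fun n =>
    (dcoc_norm_le Ps σ hcontr n ω (gs n)).trans (hgs1 n)
  have hpairf : ∀ n, ∫ x, f x * (hfun n) x ∂m = a n := by
    intro n
    rw [hhdef]
    dsimp only
    rw [← pair_coc P Ps σ hdual n ω f (gs n)]
    exact hgs2 n
  -- ultrafilter
  set U : Ultrafilter ℕ := Ultrafilter.of atTop with hUdef
  have hUle : (U : Filter ℕ) ≤ atTop := Ultrafilter.of_le atTop
  obtain ⟨g, hg_norm, hg_tend⟩ := limit_functional U hfun hh_norm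
  -- membership of g in the intersection
  have hmem : g ∈ ⋂ n : ℕ, ⇑(dcoc Ps σ (n + 1) ω) '' {u : Lp ℝ ⊤ m | ‖u‖ ≤ 1} := by
    refine Set.mem_iInter.2 fun k => ?_
    set r : ℕ → Lp ℝ ⊤ m := fun n => dcoc Ps σ (n - (k + 1)) (σ^[k + 1] ω) (gs n) with hrdef
    have hr_norm : ∀ n, ‖r n‖ ≤ 1 := fun n =>
      (dcoc_norm_le Ps σ hcontr _ _ (gs n)).trans (hgs1 n)
    obtain ⟨g', hg'_norm, hg'_tend⟩ := limit_functional U r hr_norm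
    refine ⟨g', hg'_norm, ?_⟩
    -- show dcoc (k+1) ω g' = g via pair_ext
    refine pair_ext _ _ fun u => ?_
    have hkey : ∀ n, k + 1 ≤ n → dcoc Ps σ (k + 1) ω (r n) = hfun n := by
      intro n hn
      have hsplit : dcoc Ps σ n ω = dcoc Ps σ (k + 1) ω * dcoc Ps σ (n - (k + 1)) (σ^[k + 1] ω) := by
        conv_lhs => rw [show n = (k + 1) + (n - (k + 1)) from by omega]
        exact dcoc_add Ps σ (k + 1) (n - (k + 1)) ω
      rw [hhdef, hrdef]
      dsimp only
      rw [hsplit, Module.End.mul_apply]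
    have h1 : Tendsto (fun n => ∫ x, (coc P σ (k + 1) ω u) x * (r n) x ∂m)
        (U : Filter ℕ) (𝓝 (∫ x, (coc P σ (k + 1) ω u) x * g' x ∂m)) :=
      hg'_tend (coc P σ (k + 1) ω u)
    have h2 : Tendsto (fun n => ∫ x, (coc P σ (k + 1) ω u) x * (r n) x ∂m)
        (U : Filter ℕ) (𝓝 (∫ x, u x * g x ∂m)) := by
      have heq : (fun n => ∫ x, (coc P σ (k + 1) ω u) x * (r n) x ∂m)
          =ᶠ[(U : Filter ℕ)] fun n => ∫ x, u x * (hfun n) x ∂m := by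
        refine Filter.Eventually.filter_mono hUle ?_
        filter_upwards [Filter.eventually_ge_atTop (k + 1)] with n hn
        rw [pair_coc P Ps σ hdual (k + 1) ω u (r n), hkey n hn]
      exact (Filter.Tendsto.congr' heq.symm (hg_tend u))
    have h3 : ∫ x, (coc P σ (k + 1) ω u) x * g' x ∂m = ∫ x, u x * g x ∂m :=
      tendsto_nhds_unique h1 h2
    rw [← h3, pair_coc P Ps σ hdual (k + 1) ω u g']
  have hzero : ∫ x, f x * g x ∂m = 0 := hf g hmem
  -- identify the limit
  have h4 : Tendsto a (U : Filter ℕ) (𝓝 (∫ x, f x * g x ∂m)) := by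
    refine (hg_tend f).congr fun n => ?_
    exact hpairf n
  have h5 : Tendsto a (U : Filter ℕ) (𝓝 L) := htend.mono_left hUle
  have hL0 : L = 0 := by
    have := tendsto_nhds_unique h5 h4
    rw [this, hzero]
  rw [ha] at htend
  rw [← hL0]
  exact htend
end

section
/- For an asymptotically periodic Markov operator cocycle (P,σ), the following are equivalent: (1) (P,σ) is exact; (2) (P,σ) is prior mixing for inhomogeneous observables in B(Ω, L^∞(X,m)); (3) (P,σ) is posterior mixing for inhomogeneous observables in B(Ω, L^∞(X,m)); (4) (P,σ) is asymptotically stable (period r = 1). -/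
open MeasureTheory Filter Topology

set_option linter.unusedSectionVars false
set_option maxHeartbeats 1000000

section Aux

variable {X : Type*} [MeasurableSpace X] {m : Measure X} [IsProbabilityMeasure m]

theorem Linf_ae_bound (v : Lp ℝ ⊤ m) : ∀ᵐ x ∂m, |v x| ≤ ‖v‖ := by
  have h := enorm_ae_le_eLpNormEssSup (⇑v) m
  filter_upwards [h] with x hx
  have hne : eLpNormEssSup (⇑v) m ≠ ⊤ := by
    rw [← eLpNorm_exponent_top]; exact Lp.eLpNorm_ne_top v
  have := ENNReal.toReal_mono hne hx
  simpa [Lp.norm_def, eLpNorm_exponent_top] using this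

theorem pairing_integrable (u : Lp ℝ 1 m) (v : Lp ℝ ⊤ m) :
    Integrable (fun x => u x * v x) m := by
  have hu : Integrable (⇑u) m := L1.integrable_coeFn u
  refine (hu.norm.const_mul ‖v‖).mono' ?_ ?_
  · exact (Lp.aestronglyMeasurable u).mul (Lp.aestronglyMeasurable v)
  · filter_upwards [Linf_ae_bound v] with x hx
    rw [norm_mul, mul_comm]
    exact mul_le_mul_of_nonneg_right (by simpa [Real.norm_eq_abs] using hx) (norm_nonneg _)

theorem pairing_bound (u : Lp ℝ 1 m) (v : Lp ℝ ⊤ m) :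
    |∫ x, u x * v x ∂m| ≤ ‖v‖ * ‖u‖ := by
  have hu : Integrable (⇑u) m := L1.integrable_coeFn u
  have h1 : |∫ x, u x * v x ∂m| ≤ ∫ x, |u x| * |v x| ∂m := by
    simpa [Real.norm_eq_abs, abs_mul] using
      norm_integral_le_integral_norm (fun x => u x * v x) (μ := m)
  have h2 : ∫ x, |u x| * |v x| ∂m ≤ ∫ x, ‖v‖ * |u x| ∂m := by
    refine integral_mono_ae ?_ (hu.abs.const_mul _) ?_
    · simpa [abs_mul] using (pairing_integrable u v).abs
    · filter_upwards [Linf_ae_bound v] with x hx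
      rw [mul_comm ‖v‖ _]
      exact mul_le_mul_of_nonneg_left hx (abs_nonneg _)
  have h3 : ∫ x, ‖v‖ * |u x| ∂m = ‖v‖ * ‖u‖ := by
    rw [integral_const_mul]
    congr 1
    rw [L1.norm_eq_integral_norm]
    simp [Real.norm_eq_abs]
  exact h1.trans (h2.trans h3.le)

/-- Markov property of an operator. -/
def IsMarkov (T : Module.End ℝ (Lp ℝ 1 m)) : Prop :=
  (∀ f : Lp ℝ 1 m, 0 ≤ f → 0 ≤ T f) ∧ ∀ f : Lp ℝ 1 m, ∫ x, (T f) x ∂m = ∫ x, f x ∂m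

theorem IsMarkov.abs_apply_le {T : Module.End ℝ (Lp ℝ 1 m)} (hT : IsMarkov T) (u : Lp ℝ 1 m) :
    |T u| ≤ T |u| := by
  rcases hT with ⟨hpos, _⟩
  rw [abs_le']
  constructor
  · rw [← sub_nonneg, ← map_sub]
    exact hpos _ (sub_nonneg.2 (le_abs_self u))
  · rw [← map_neg, ← sub_nonneg, ← map_sub]
    exact hpos _ (sub_nonneg.2 (neg_le_abs u))

theorem L1_norm_le_of_le_abs {u v : Lp ℝ 1 m} (h : |u| ≤ v) : ‖u‖ ≤ ∫ x, v x ∂m := by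
  rw [L1.norm_eq_integral_norm]
  refine integral_mono_ae (L1.integrable_coeFn u).norm (L1.integrable_coeFn v) ?_
  have h1 := (Lp.coeFn_le _ _).2 h
  filter_upwards [h1, Lp.coeFn_abs u] with x hx habs
  rw [Real.norm_eq_abs]
  calc |u x| = |u| x := habs.symm
    _ ≤ v x := hx

theorem IsMarkov.norm_apply_le {T : Module.End ℝ (Lp ℝ 1 m)} (hT : IsMarkov T) (u : Lp ℝ 1 m) :
    ‖T u‖ ≤ ‖u‖ := by
  refine (L1_norm_le_of_le_abs (hT.abs_apply_le u)).trans ?_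
  rw [hT.2 |u|, L1.norm_eq_integral_norm]
  refine le_of_eq (integral_congr_ae ?_)
  filter_upwards [Lp.coeFn_abs u] with x habs
  rw [habs, Real.norm_eq_abs]

theorem disjoint_diff_norm {a b : Lp ℝ 1 m} (ha : 0 ≤ a) (hb : 0 ≤ b)
    (hia : ∫ x, a x ∂m = 1) (hib : ∫ x, b x ∂m = 1) (hd : a ⊓ b = 0) :
    ‖a - b‖ = 2 := by
  have hz : ⇑(a ⊓ b) =ᵐ[m] 0 := by rw [hd]; exact Lp.coeFn_zero ℝ 1 m
  have h1 : ‖a - b‖ = ∫ x, |a x - b x| ∂m := by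
    rw [L1.norm_eq_integral_norm]
    refine integral_congr_ae ?_
    filter_upwards [Lp.coeFn_sub a b] with x hx
    rw [hx]; simp [Real.norm_eq_abs]
  have h2 : ∫ x, |a x - b x| ∂m = ∫ x, a x + b x ∂m := by
    refine integral_congr_ae ?_
    filter_upwards [Lp.coeFn_inf a b, hz, (Lp.coeFn_nonneg a).2 ha, (Lp.coeFn_nonneg b).2 hb]
      with x h1 h2 h3 h4
    simp only [Pi.inf_apply, Pi.zero_apply] at h1 h2 h3 h4
    have hmin : a x ⊓ b x = 0 := by rw [← h1, h2]
    rcases le_total (a x) (b x) with h | h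
    · have ha0 : a x = 0 := by rwa [inf_eq_left.2 h] at hmin
      rw [ha0, zero_sub, abs_neg, abs_of_nonneg h4, zero_add]
    · have hb0 : b x = 0 := by rwa [inf_eq_right.2 h] at hmin
      rw [hb0, sub_zero, add_zero, abs_of_nonneg h3]
  rw [h1, h2, integral_add (L1.integrable_coeFn a) (L1.integrable_coeFn b), hia, hib]
  norm_num

/-- The sign functional: attains the L¹ norm by pairing with an L^∞ function. -/
theorem exists_sign_functional (u : Lp ℝ 1 m) :
    ∃ h : Lp ℝ ⊤ m, ‖h‖ ≤ 1 ∧ ∫ x, u x * h x ∂m = ‖u‖ := by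
  set w := (Lp.aestronglyMeasurable u).mk with hw
  have hwsm : StronglyMeasurable w := (Lp.aestronglyMeasurable u).stronglyMeasurable_mk
  have hweq : ⇑u =ᵐ[m] w := (Lp.aestronglyMeasurable u).ae_eq_mk
  have hwmeas : Measurable w := hwsm.measurable
  set s : X → ℝ := fun x => if w x < 0 then -1 else if 0 < w x then 1 else 0 with hs
  have hsmeas : Measurable s := by
    refine Measurable.ite (measurableSet_lt hwmeas measurable_const) measurable_const ?_
    exact Measurable.ite (measurableSet_lt measurable_const hwmeas) measurable_const
      measurable_const
  have hsbd : ∀ x, ‖s x‖ ≤ 1 := by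
    intro x; simp only [hs, Real.norm_eq_abs]
    split_ifs <;> norm_num
  have hmem : MemLp s ⊤ m :=
    memLp_top_of_bound hsmeas.stronglyMeasurable.aestronglyMeasurable 1
      (Eventually.of_forall hsbd)
  refine ⟨hmem.toLp s, ?_, ?_⟩
  · have := Lp.norm_le_of_ae_bound (f := hmem.toLp s) (C := 1) zero_le_one ?_
    · simpa [measureUnivNNReal] using this
    · filter_upwards [hmem.coeFn_toLp] with x hx
      rw [hx]; exact hsbd x
  · have key : ∀ᵐ x ∂m, u x * (hmem.toLp s) x = ‖u x‖ := by
      filter_upwards [hmem.coeFn_toLp, hweq] with x hx hwx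
      rw [hx, hwx, Real.norm_eq_abs, hs]
      rcases lt_trichotomy (w x) 0 with h | h | h
      · simp only [if_pos h]; rw [abs_of_neg h]; ring
      · simp [h]
      · simp only [if_neg (not_lt.2 h.le), if_pos h]; rw [abs_of_pos h]; ring
    rw [integral_congr_ae key, L1.norm_eq_integral_norm]

theorem integral_coe_sub_smul (f g : Lp ℝ 1 m) (c : ℝ) :
    ∫ x, ((f - c • g) : Lp ℝ 1 m) x ∂m = ∫ x, f x ∂m - c * ∫ x, g x ∂m := by
  have h : ⇑(f - c • g) =ᵐ[m] fun x => f x - c * g x := by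
    filter_upwards [Lp.coeFn_sub f (c • g), Lp.coeFn_smul c g] with x h1 h2
    rw [h1]; simp [h2]
  rw [integral_congr_ae h, integral_sub (L1.integrable_coeFn f)
    ((L1.integrable_coeFn g).const_mul c), integral_const_mul]

theorem integral_coe_sub (f g : Lp ℝ 1 m) :
    ∫ x, ((f - g) : Lp ℝ 1 m) x ∂m = ∫ x, f x ∂m - ∫ x, g x ∂m := by
  have := integral_coe_sub_smul f g 1
  simpa using this

theorem abs_integral_le_norm (u : Lp ℝ 1 m) : |∫ x, u x ∂m| ≤ ‖u‖ := by
  rw [L1.norm_eq_integral_norm]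
  simpa [Real.norm_eq_abs] using norm_integral_le_integral_norm (⇑u) (μ := m)

theorem norm_of_nonneg_eq_integral {u : Lp ℝ 1 m} (hu : 0 ≤ u) : ‖u‖ = ∫ x, u x ∂m := by
  rw [L1.norm_eq_integral_norm]
  refine integral_congr_ae ?_
  filter_upwards [(Lp.coeFn_nonneg u).2 hu] with x hx
  rw [Real.norm_eq_abs, abs_of_nonneg hx]

theorem pairing_sub (u v : Lp ℝ 1 m) (h : Lp ℝ ⊤ m) :
    ∫ x, ((u - v) : Lp ℝ 1 m) x * h x ∂m = ∫ x, u x * h x ∂m - ∫ x, v x * h x ∂m := by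
  have he : (fun x => ((u - v) : Lp ℝ 1 m) x * h x) =ᵐ[m]
      fun x => u x * h x - v x * h x := by
    filter_upwards [Lp.coeFn_sub u v] with x hx
    rw [hx]; simp [sub_mul]
  rw [integral_congr_ae he,
    integral_sub (pairing_integrable u h) (pairing_integrable v h)]

theorem pairing_continuous (h : Lp ℝ ⊤ m) :
    Continuous fun u : Lp ℝ 1 m => ∫ x, u x * h x ∂m := by
  have : LipschitzWith ‖h‖₊ (fun u : Lp ℝ 1 m => ∫ x, u x * h x ∂m) := by
    refine LipschitzWith.of_dist_le_mul fun u v => ?_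
    rw [Real.dist_eq, ← pairing_sub u v h, coe_nnnorm, dist_eq_norm]
    exact pairing_bound (u - v) h
  exact this.continuous

end Aux

section Orbit

variable {X : Type*} [MeasurableSpace X] {m : Measure X} [IsProbabilityMeasure m]
variable {Ω : Type*} [MeasurableSpace Ω] {Pr : Measure Ω} {σ : Ω → Ω}

theorem ae_orbit (hσ : MeasurePreserving σ Pr Pr) {p : Ω → Prop} (hp : ∀ᵐ ω ∂Pr, p ω) :
    ∀ᵐ ω ∂Pr, ∀ n, p (σ^[n] ω) := by
  rw [ae_all_iff]
  intro n
  exact ((hσ.iterate n).quasiMeasurePreserving).ae hp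

variable {P : Ω → Module.End ℝ (Lp ℝ 1 m)}

theorem coc_zero_apply (ω : Ω) (f : Lp ℝ 1 m) : coc P σ 0 ω f = f := rfl

theorem coc_succ_apply (n : ℕ) (ω : Ω) (f : Lp ℝ 1 m) :
    coc P σ (n + 1) ω f = P (σ^[n] ω) (coc P σ n ω f) := rfl

theorem coc_norm_le (ω : Ω) (hgood : ∀ n : ℕ, IsMarkov (P (σ^[n] ω)))
    (n : ℕ) (u : Lp ℝ 1 m) : ‖coc P σ n ω u‖ ≤ ‖u‖ := by
  induction n with
  | zero => exact le_of_eq rfl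
  | succ k ih =>
    rw [coc_succ_apply]
    exact ((hgood k).norm_apply_le _).trans ih

theorem coc_integral (ω : Ω) (hgood : ∀ n : ℕ, IsMarkov (P (σ^[n] ω)))
    (n : ℕ) (u : Lp ℝ 1 m) : ∫ x, (coc P σ n ω u) x ∂m = ∫ x, u x ∂m := by
  induction n with
  | zero => rfl
  | succ k ih => rw [coc_succ_apply, (hgood k).2, ih]

theorem coc_g {r : ℕ} {g : Fin r → Ω → Lp ℝ 1 m} {ρ : Ω → Equiv.Perm (Fin r)} (ω : Ω)
    (hgood : ∀ (n : ℕ) (i : Fin r),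
      P (σ^[n] ω) (g i (σ^[n] ω)) = g (ρ (σ^[n] ω) i) (σ (σ^[n] ω)))
    (n : ℕ) (i : Fin r) :
    coc P σ n ω (g i ω) = g (coc ρ σ n ω i) (σ^[n] ω) := by
  induction n with
  | zero => rfl
  | succ k ih =>
    rw [coc_succ_apply, ih, hgood k (coc ρ σ k ω i)]
    rw [← Function.iterate_succ_apply' σ k ω]
    rfl

end Orbit

section Stmts

variable {X : Type*} [MeasurableSpace X] (m : Measure X) [IsProbabilityMeasure m]
variable {Ω : Type*} [MeasurableSpace Ω] (Pr : Measure Ω)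
variable (σ : Ω → Ω) (P : Ω → Module.End ℝ (Lp ℝ 1 m))

def StmtExact : Prop :=
  ∀ᵐ ω ∂Pr, ∀ f : Lp ℝ 1 m, ∫ x, f x ∂m = 0 →
    Tendsto (fun n => ‖coc P σ n ω f‖) atTop (𝓝 0)

def StmtPrior : Prop :=
  ∀ᵐ ω ∂Pr, ∀ (f : Lp ℝ 1 m), ∫ x, f x ∂m = 0 →
    ∀ (G : Ω → Lp ℝ ⊤ m), StronglyMeasurable G → (∃ C : ℝ, ∀ ω', ‖G ω'‖ ≤ C) →
      Tendsto (fun n => ∫ x, (coc P σ n ω f) x * (G (σ^[n] ω)) x ∂m)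
        atTop (𝓝 0)

def StmtPost : Prop :=
  ∀ (f : Lp ℝ 1 m), ∫ x, f x ∂m = 0 →
    ∀ (G : Ω → Lp ℝ ⊤ m), StronglyMeasurable G → (∃ C : ℝ, ∀ ω', ‖G ω'‖ ≤ C) →
      ∀ᵐ ω ∂Pr,
        Tendsto (fun n => ∫ x, (coc P σ n ω f) x * (G (σ^[n] ω)) x ∂m)
          atTop (𝓝 0)

def StmtStable : Prop :=
  ∃ (g' : Ω → Lp ℝ 1 m) (lam' : Ω → (Lp ℝ 1 m →L[ℝ] ℝ)),
    StronglyMeasurable g' ∧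
    (∀ f : Lp ℝ 1 m, StronglyMeasurable (fun ω => lam' ω f)) ∧
    (∃ C : ℝ, ∀ ω, ‖lam' ω‖ ≤ C) ∧
    (∀ᵐ ω ∂Pr, (0 ≤ g' ω ∧ ∫ x, (g' ω) x ∂m = 1) ∧
      P ω (g' ω) = g' (σ ω) ∧
      ∀ f : Lp ℝ 1 m,
        Tendsto (fun n => ‖coc P σ n ω (f - lam' ω f • g' ω)‖)
          atTop (𝓝 0))

variable {m Pr σ P}

theorem exact_implies_prior (h1 : StmtExact m Pr σ P) : StmtPrior m Pr σ P := by
  filter_upwards [h1] with ω hω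
  intro f hf G _ hGb
  obtain ⟨C, hC⟩ := hGb
  have hC0 : ∀ ω', ‖G ω'‖ ≤ max C 0 := fun ω' => (hC ω').trans (le_max_left _ _)
  rw [tendsto_zero_iff_norm_tendsto_zero]
  refine squeeze_zero (fun n => norm_nonneg _) (g := fun n => max C 0 * ‖coc P σ n ω f‖)
    (fun n => ?_) ?_
  · rw [Real.norm_eq_abs]
    refine (pairing_bound _ _).trans ?_
    exact mul_le_mul_of_nonneg_right (hC0 _) (norm_nonneg _)
  · simpa using (hω f hf).const_mul (max C 0)

theorem prior_implies_post (h2 : StmtPrior m Pr σ P) : StmtPost m Pr σ P := by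
  intro f hf G h1g h2g
  filter_upwards [h2] with ω hω
  exact hω f hf G h1g h2g

end Stmts
/-- For an asymptotically periodic Markov operator cocycle `(P,σ)` the following
are equivalent: (1) exactness; (2) prior mixing for inhomogeneous observables in
`B(Ω, L^∞(X,m))`; (3) posterior mixing for inhomogeneous observables in
`B(Ω, L^∞(X,m))`; (4) asymptotic stability (asymptotic periodicity with
period `r = 1`). -/
theorem asymptotically_periodic_exact_mixing_stable_equivalences
    {X : Type*} [MeasurableSpace X] (m : Measure X) [IsProbabilityMeasure m]
    {Ω : Type*} [MeasurableSpace Ω] (Pr : Measure Ω) [IsProbabilityMeasure Pr]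
    (σ : Ω → Ω) (hσ : MeasurePreserving σ Pr Pr)
    (P : Ω → Module.End ℝ (Lp ℝ 1 m))
    (hP : ∀ᵐ ω ∂Pr, (∀ f : Lp ℝ 1 m, 0 ≤ f → 0 ≤ P ω f) ∧
      ∀ f : Lp ℝ 1 m, ∫ x, (P ω f) x ∂m = ∫ x, f x ∂m)
    -- asymptotic periodicity data:
    (r : ℕ) (hr : 0 < r)
    (g : Fin r → Ω → Lp ℝ 1 m) (lam : Fin r → Ω → (Lp ℝ 1 m →L[ℝ] ℝ))
    (ρ : Ω → Equiv.Perm (Fin r))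
    (hgmeas : ∀ i, StronglyMeasurable (g i))
    (hlammeas : ∀ i (f : Lp ℝ 1 m), StronglyMeasurable (fun ω => lam i ω f))
    (hlambdd : ∃ C : ℝ, ∀ i ω, ‖lam i ω‖ ≤ C)
    (hdens : ∀ᵐ ω ∂Pr, ∀ i, 0 ≤ g i ω ∧ ∫ x, (g i ω) x ∂m = 1)
    (hdisj : ∀ᵐ ω ∂Pr, ∀ i j, i ≠ j → g i ω ⊓ g j ω = 0)
    (hperm : ∀ᵐ ω ∂Pr, ∀ i, P ω (g i ω) = g (ρ ω i) (σ ω))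
    (hconv : ∀ᵐ ω ∂Pr, ∀ f : Lp ℝ 1 m,
      Tendsto (fun n => ‖coc P σ n ω (f - ∑ i, lam i ω f • g i ω)‖)
        atTop (𝓝 0)) :
    -- (1) exactness
    ((∀ᵐ ω ∂Pr, ∀ f : Lp ℝ 1 m, ∫ x, f x ∂m = 0 →
        Tendsto (fun n => ‖coc P σ n ω f‖) atTop (𝓝 0)) ↔
      -- (2) prior mixing for inhomogeneous observables in B(Ω, L^∞)
      (∀ᵐ ω ∂Pr, ∀ (f : Lp ℝ 1 m), ∫ x, f x ∂m = 0 →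
        ∀ (G : Ω → Lp ℝ ⊤ m), StronglyMeasurable G → (∃ C : ℝ, ∀ ω', ‖G ω'‖ ≤ C) →
          Tendsto (fun n => ∫ x, (coc P σ n ω f) x * (G (σ^[n] ω)) x ∂m)
            atTop (𝓝 0))) ∧
    -- (2) ↔ (3) posterior mixing for inhomogeneous observables in B(Ω, L^∞)
    ((∀ᵐ ω ∂Pr, ∀ (f : Lp ℝ 1 m), ∫ x, f x ∂m = 0 →
        ∀ (G : Ω → Lp ℝ ⊤ m), StronglyMeasurable G → (∃ C : ℝ, ∀ ω', ‖G ω'‖ ≤ C) →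
          Tendsto (fun n => ∫ x, (coc P σ n ω f) x * (G (σ^[n] ω)) x ∂m)
            atTop (𝓝 0)) ↔
      (∀ (f : Lp ℝ 1 m), ∫ x, f x ∂m = 0 →
        ∀ (G : Ω → Lp ℝ ⊤ m), StronglyMeasurable G → (∃ C : ℝ, ∀ ω', ‖G ω'‖ ≤ C) →
          ∀ᵐ ω ∂Pr,
            Tendsto (fun n => ∫ x, (coc P σ n ω f) x * (G (σ^[n] ω)) x ∂m)
              atTop (𝓝 0))) ∧
    -- (3) ↔ (4) asymptotic stability
    ((∀ (f : Lp ℝ 1 m), ∫ x, f x ∂m = 0 →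
        ∀ (G : Ω → Lp ℝ ⊤ m), StronglyMeasurable G → (∃ C : ℝ, ∀ ω', ‖G ω'‖ ≤ C) →
          ∀ᵐ ω ∂Pr,
            Tendsto (fun n => ∫ x, (coc P σ n ω f) x * (G (σ^[n] ω)) x ∂m)
              atTop (𝓝 0)) ↔
      (∃ (g' : Ω → Lp ℝ 1 m) (lam' : Ω → (Lp ℝ 1 m →L[ℝ] ℝ)),
        StronglyMeasurable g' ∧
        (∀ f : Lp ℝ 1 m, StronglyMeasurable (fun ω => lam' ω f)) ∧
        (∃ C : ℝ, ∀ ω, ‖lam' ω‖ ≤ C) ∧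
        (∀ᵐ ω ∂Pr, (0 ≤ g' ω ∧ ∫ x, (g' ω) x ∂m = 1) ∧
          P ω (g' ω) = g' (σ ω) ∧
          ∀ f : Lp ℝ 1 m,
            Tendsto (fun n => ‖coc P σ n ω (f - lam' ω f • g' ω)‖)
              atTop (𝓝 0)))) := by
  classical
  have hMarkov : ∀ᵐ ω ∂Pr, IsMarkov (P ω) := hP
  have hMO := ae_orbit hσ hMarkov
  suffices h : (StmtExact m Pr σ P ↔ StmtPrior m Pr σ P) ∧
      (StmtPrior m Pr σ P ↔ StmtPost m Pr σ P) ∧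
      (StmtPost m Pr σ P ↔ StmtStable m Pr σ P) by
    exact h
  rcases Nat.lt_or_ge r 2 with hlt | hge
  · -- r = 1 : everything holds
    have hr1 : r = 1 := by omega
    subst hr1
    have core : ∀ᵐ ω ∂Pr, ∀ f : Lp ℝ 1 m, lam 0 ω f = ∫ x, f x ∂m := by
      filter_upwards [hconv, hMO, hdens] with ω hc hM hd
      intro f
      have hconv1 : Tendsto (fun n => ‖coc P σ n ω (f - lam 0 ω f • g 0 ω)‖) atTop (𝓝 0) := by
        have := hc f
        rwa [Fin.sum_univ_one] at this
      have hint : ∀ n, |∫ x, f x ∂m - lam 0 ω f| ≤ ‖coc P σ n ω (f - lam 0 ω f • g 0 ω)‖ := by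
        intro n
        have h1 := coc_integral ω hM n (f - lam 0 ω f • g 0 ω)
        rw [integral_coe_sub_smul, (hd 0).2, mul_one] at h1
        have h2 := abs_integral_le_norm (coc P σ n ω (f - lam 0 ω f • g 0 ω))
        rwa [h1] at h2
      have h0 : |∫ x, f x ∂m - lam 0 ω f| ≤ 0 := ge_of_tendsto' hconv1 hint
      have := abs_nonpos_iff.mp (h0)
      linarith [sub_eq_zero.mp this]
    have s1 : StmtExact m Pr σ P := by
      filter_upwards [core, hconv] with ω hcore hc
      intro f hf
      have := hc f
      rwa [Fin.sum_univ_one, hcore f, hf, zero_smul, sub_zero] at this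
    have s4 : StmtStable m Pr σ P := by
      obtain ⟨C, hC⟩ := hlambdd
      refine ⟨g 0, lam 0, hgmeas 0, hlammeas 0, ⟨C, fun ω => hC 0 ω⟩, ?_⟩
      filter_upwards [hdens, hperm, hconv] with ω h1 h2 h3
      refine ⟨h1 0, ?_, fun f => ?_⟩
      · rw [h2 0]; congr 1; exact Subsingleton.elim _ _
      · have := h3 f; rwa [Fin.sum_univ_one] at this
    have s2 := exact_implies_prior s1
    have s3 := prior_implies_post s2
    exact ⟨iff_of_true s1 s2, iff_of_true s2 s3, iff_of_true s3 s4⟩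
  · -- r ≥ 2 : everything fails
    have hPO := ae_orbit hσ hperm
    have hDO := ae_orbit hσ hdens
    have hJO := ae_orbit hσ hdisj
    set i0 : Fin r := ⟨0, by omega⟩ with hi0
    set i1 : Fin r := ⟨1, by omega⟩ with hi1
    have hne : i0 ≠ i1 := by simp [hi0, hi1, Fin.ext_iff]
    have hnonempty : ∀ (E : Set Ω), Pr E ≠ 0 → ∀ {q : Ω → Prop}, (∀ᵐ ω ∂Pr, q ω) →
        ∃ ω ∈ E, q ω := by
      intro E hE q hq
      by_contra hcon
      push_neg at hcon
      exact hE (measure_mono_null (fun ω hω => by simpa using hcon ω hω) (ae_iff.1 hq))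
    have n1 : ¬ StmtExact m Pr σ P := by
      intro h1
      obtain ⟨ω, hω1, hd0, hPOω, hDOω, hJOω⟩ :=
        (h1.and (hdens.and (hPO.and (hDO.and hJO)))).exists
      set u : Lp ℝ 1 m := g i0 ω - g i1 ω with hu
      have hint : ∫ x, u x ∂m = 0 := by
        rw [hu, integral_coe_sub, (hd0 i0).2, (hd0 i1).2, sub_self]
      have hten := hω1 u hint
      have hnorm : ∀ n, ‖coc P σ n ω u‖ = 2 := by
        intro n
        rw [hu, map_sub, coc_g ω hPOω n i0, coc_g ω hPOω n i1]
        exact disjoint_diff_norm ((hDOω n _).1) ((hDOω n _).1) ((hDOω n _).2) ((hDOω n _).2)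
          (hJOω n _ _ ((coc ρ σ n ω).injective.ne hne))
      simp only [hnorm] at hten
      have := tendsto_nhds_unique hten tendsto_const_nhds
      norm_num at this
    have n4 : ¬ StmtStable m Pr σ P := by
      rintro ⟨g', lam', -, -, -, hae⟩
      obtain ⟨ω, hdω, hPOω, hDOω, hJOω, hMOω, haeω, haeOω⟩ :=
        (hdens.and (hPO.and (hDO.and (hJO.and (hMO.and
          (hae.and (ae_orbit hσ hae))))))).exists
      have hg'coc : ∀ n, coc P σ n ω (g' ω) = g' (σ^[n] ω) := by
        intro n
        induction n with
        | zero => rfl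
        | succ k ih =>
          rw [coc_succ_apply, ih, (haeOω k).2.1, ← Function.iterate_succ_apply' σ k ω]
      have key : ∀ j : Fin r, Tendsto
          (fun n => ‖g (coc ρ σ n ω j) (σ^[n] ω) - g' (σ^[n] ω)‖) atTop (𝓝 0) := by
        intro j
        have hconvj := haeω.2.2 (g j ω)
        set b : ℝ := lam' ω (g j ω) with hb
        have hbint : ∀ n, |1 - b| ≤ ‖coc P σ n ω (g j ω - b • g' ω)‖ := by
          intro n
          have h1 := coc_integral ω hMOω n (g j ω - b • g' ω)
          rw [integral_coe_sub_smul, (hdω j).2, haeω.1.2, mul_one] at h1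
          have h2 := abs_integral_le_norm (coc P σ n ω (g j ω - b • g' ω))
          rwa [h1] at h2
        have hb1 : b = 1 := by
          have h0 : |1 - b| ≤ 0 := ge_of_tendsto' hconvj hbint
          have := abs_nonpos_iff.mp h0
          linarith [sub_eq_zero.mp this]
        have heq : ∀ n, coc P σ n ω (g j ω - b • g' ω)
            = g (coc ρ σ n ω j) (σ^[n] ω) - g' (σ^[n] ω) := by
          intro n
          rw [map_sub, _root_.map_smul, coc_g ω hPOω n j, hg'coc n, hb1, one_smul]
        refine hconvj.congr fun n => ?_
        rw [heq n]
      have contra : ∀ n : ℕ, (2:ℝ) ≤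
          ‖g (coc ρ σ n ω i0) (σ^[n] ω) - g' (σ^[n] ω)‖ +
          ‖g (coc ρ σ n ω i1) (σ^[n] ω) - g' (σ^[n] ω)‖ := by
        intro n
        have hd2 : ‖g (coc ρ σ n ω i0) (σ^[n] ω) - g (coc ρ σ n ω i1) (σ^[n] ω)‖ = 2 :=
          disjoint_diff_norm ((hDOω n _).1) ((hDOω n _).1) ((hDOω n _).2) ((hDOω n _).2)
            (hJOω n _ _ ((coc ρ σ n ω).injective.ne hne))
        calc (2:ℝ) = ‖g (coc ρ σ n ω i0) (σ^[n] ω) - g (coc ρ σ n ω i1) (σ^[n] ω)‖ := hd2.symm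
          _ ≤ ‖g (coc ρ σ n ω i0) (σ^[n] ω) - g' (σ^[n] ω)‖ +
              ‖g' (σ^[n] ω) - g (coc ρ σ n ω i1) (σ^[n] ω)‖ := by
                rw [← dist_eq_norm, ← dist_eq_norm, ← dist_eq_norm]
                exact dist_triangle _ _ _
          _ = _ := by rw [norm_sub_rev (g' (σ^[n] ω))]
      have hsum := (key i0).add (key i1)
      have h20 : (2:ℝ) ≤ 0 + 0 := ge_of_tendsto' hsum contra
      linarith
    have n3 : ¬ StmtPost m Pr σ P := by
      intro h3
      -- Step 1: a positive measure set where (g i0, g i1) is close to a fixed pair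
      have hFsm : StronglyMeasurable (fun ω => (g i0 ω, g i1 ω)) :=
        (hgmeas i0).prodMk (hgmeas i1)
      obtain ⟨c, hcc, hcsub⟩ := hFsm.isSeparable_range
      have hex : ∃ z ∈ c, Pr {ω | dist (g i0 ω, g i1 ω) z < 1/100} ≠ 0 := by
        by_contra hno
        push_neg at hno
        have hcover : (Set.univ : Set Ω) ⊆
            ⋃ z ∈ c, {ω | dist (g i0 ω, g i1 ω) z < 1/100} := by
          intro ω _
          have hmem : (g i0 ω, g i1 ω) ∈ closure c := hcsub ⟨ω, rfl⟩
          rcases Metric.mem_closure_iff.1 hmem (1/100) (by norm_num) with ⟨z, hz, hd⟩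
          exact Set.mem_biUnion hz hd
        have h1 : (1 : ENNReal) ≤ 0 := by
          calc (1:ENNReal) = Pr Set.univ := measure_univ.symm
            _ ≤ Pr (⋃ z ∈ c, {ω | dist (g i0 ω, g i1 ω) z < 1/100}) := measure_mono hcover
            _ ≤ ∑' (z : c), Pr {ω | dist (g i0 ω, g i1 ω) (z : _) < 1/100} :=
                measure_biUnion_le Pr hcc _
            _ = 0 := by
                rw [ENNReal.tsum_eq_zero]
                exact fun z => hno z z.2
        simp at h1
      obtain ⟨z, hzc, hA⟩ := hex
      obtain ⟨f₀, f₁⟩ := z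
      set A : Set Ω := {ω | dist (g i0 ω, g i1 ω) (f₀, f₁) < 1/100} with hAdef
      have hAest : ∀ ω' ∈ A, ‖f₀ - g i0 ω'‖ ≤ 1/100 ∧ ‖f₁ - g i1 ω'‖ ≤ 1/100 := by
        intro ω' hω'
        have hd : dist (g i0 ω', g i1 ω') (f₀, f₁) < 1/100 := hω'
        rw [Prod.dist_eq] at hd
        constructor
        · rw [norm_sub_rev, ← dist_eq_norm]
          exact ((le_max_left _ _).trans_lt hd).le
        · rw [norm_sub_rev, ← dist_eq_norm]
          exact ((le_max_right _ _).trans_lt hd).le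
      obtain ⟨ω₁, hω₁A, hω₁d⟩ := hnonempty A hA hdens
      set s0 : ℝ := ∫ x, f₀ x ∂m with hs0def
      set s1 : ℝ := ∫ x, f₁ x ∂m with hs1def
      have hs0 : |s0 - 1| ≤ 1/100 := by
        have h2 := abs_integral_le_norm (f₀ - g i0 ω₁)
        rw [integral_coe_sub, (hω₁d i0).2] at h2
        exact h2.trans ((hAest ω₁ hω₁A).1)
      have hs1 : |s1 - 1| ≤ 1/100 := by
        have h2 := abs_integral_le_norm (f₁ - g i1 ω₁)
        rw [integral_coe_sub, (hω₁d i1).2] at h2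
        exact h2.trans ((hAest ω₁ hω₁A).2)
      have hs0pos : (99/100 : ℝ) ≤ s0 := by
        have h := abs_le.1 hs0; linarith [h.1]
      have hs0ne : s0 ≠ 0 := by linarith
      have hf₀n : ‖f₀‖ ≤ 101/100 := by
        have h1 : ‖f₀‖ ≤ ‖f₀ - g i0 ω₁‖ + ‖g i0 ω₁‖ := by
          calc ‖f₀‖ = ‖(f₀ - g i0 ω₁) + g i0 ω₁‖ := by rw [sub_add_cancel]
            _ ≤ _ := norm_add_le _ _
        have h2 : ‖g i0 ω₁‖ = 1 := by
          rw [norm_of_nonneg_eq_integral (hω₁d i0).1, (hω₁d i0).2]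
        rw [h2] at h1
        linarith [(hAest ω₁ hω₁A).1]
      set fh : Lp ℝ 1 m := (f₀ - f₁) - ((s0 - s1)/s0) • f₀ with hfh
      have hfhint : ∫ x, fh x ∂m = 0 := by
        rw [hfh, integral_coe_sub_smul, integral_coe_sub, ← hs0def, ← hs1def,
          div_mul_cancel₀ _ hs0ne, sub_self]
      have herr : ∀ ω' ∈ A, ‖fh - (g i0 ω' - g i1 ω')‖ ≤ 1/20 := by
        intro ω' hω'
        have hid : fh - (g i0 ω' - g i1 ω')
            = (f₀ - g i0 ω') - (f₁ - g i1 ω') - ((s0 - s1)/s0) • f₀ := by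
          rw [hfh]; abel
        rw [hid]
        have h3' : ‖((s0 - s1)/s0) • f₀‖ ≤ 3/100 := by
          rw [norm_smul, Real.norm_eq_abs, abs_div]
          have hnum : |s0 - s1| ≤ 2/100 := by
            have ha := abs_le.1 hs0; have hb := abs_le.1 hs1
            rw [abs_le]; constructor <;> linarith [ha.1, ha.2, hb.1, hb.2]
          have hden : (99/100:ℝ) ≤ |s0| := by
            rw [abs_of_pos (by linarith : (0:ℝ) < s0)]; exact hs0pos
          have hq1 : |s0 - s1| / |s0| ≤ (2/100) / (99/100) :=
            div_le_div₀ (by norm_num) hnum (by norm_num) hden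
          calc |s0 - s1| / |s0| * ‖f₀‖ ≤ (2/100)/(99/100) * (101/100) :=
                mul_le_mul hq1 hf₀n (norm_nonneg _) (by norm_num)
            _ ≤ 3/100 := by norm_num
        calc ‖(f₀ - g i0 ω') - (f₁ - g i1 ω') - ((s0 - s1)/s0) • f₀‖
            ≤ ‖(f₀ - g i0 ω') - (f₁ - g i1 ω')‖ + ‖((s0 - s1)/s0) • f₀‖ := norm_sub_le _ _
          _ ≤ ‖f₀ - g i0 ω'‖ + ‖f₁ - g i1 ω'‖ + ‖((s0 - s1)/s0) • f₀‖ := by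
              have h4 := norm_sub_le (f₀ - g i0 ω') (f₁ - g i1 ω'); linarith
          _ ≤ 1/100 + 1/100 + 3/100 := by
              have h := hAest ω' hω'; linarith [h.1, h.2, h3']
          _ ≤ 1/20 := by norm_num
      -- Step 2: sign functionals over a countable dense family
      have hTsep : TopologicalSpace.IsSeparable
          (⋃ p : Fin r × Fin r, Set.range (fun ω' => g p.1 ω' - g p.2 ω')) :=
        TopologicalSpace.IsSeparable.iUnion fun p =>
          ((hgmeas p.1).sub (hgmeas p.2)).isSeparable_range
      obtain ⟨cT, hcTc, hcTsub⟩ := hTsep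
      obtain ⟨e, he⟩ := (hcTc.insert 0).exists_eq_range (Set.insert_nonempty _ _)
      set H : ℕ → Lp ℝ ⊤ m := fun k => Classical.choose (exists_sign_functional (e k))
        with hHdef
      have hHspec : ∀ k, ‖H k‖ ≤ 1 ∧ ∫ x, (e k) x * (H k) x ∂m = ‖e k‖ :=
        fun k => Classical.choose_spec (exists_sign_functional (e k))
      have hsel : ∀ v : Lp ℝ 1 m,
          v ∈ (⋃ p : Fin r × Fin r, Set.range (fun ω' => g p.1 ω' - g p.2 ω')) →
          ‖v‖ = 2 → ∃ k, (7/4 : ℝ) ≤ ∫ x, v x * (H k) x ∂m := by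
        intro v hv hnv
        have hvc : v ∈ closure cT := hcTsub hv
        rcases Metric.mem_closure_iff.1 hvc (1/8) (by norm_num) with ⟨u, hu, hd⟩
        have hur : u ∈ Set.range e := by rw [← he]; exact Set.mem_insert_of_mem _ hu
        obtain ⟨k, hk⟩ := hur
        refine ⟨k, ?_⟩
        have hvu : ‖v - u‖ < 1/8 := by rwa [← dist_eq_norm]
        have hun : (15/8:ℝ) ≤ ‖u‖ := by
          have h7 := norm_sub_norm_le v u
          rw [hnv] at h7; linarith
        have hvalue : ∫ x, u x * (H k) x ∂m = ‖u‖ := by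
          rw [← hk]; exact (hHspec k).2
        have habs : |∫ x, ((v - u : Lp ℝ 1 m)) x * (H k) x ∂m| ≤ 1 * (1/8) := by
          refine (pairing_bound _ _).trans ?_
          exact mul_le_mul (hHspec k).1 hvu.le (norm_nonneg _) zero_le_one
        rw [pairing_sub] at habs
        have h8 := abs_le.1 habs
        linarith [h8.1, h8.2]
      -- Step 3: measurable selection of a sign functional
      have hQ'ex : ∀ (p : Fin r × Fin r) (ω' : Ω), ∃ k,
          ((7/4 : ℝ) ≤ ∫ x, ((g p.1 ω' - g p.2 ω' : Lp ℝ 1 m)) x * (H k) x ∂m) ∨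
          (k = 0 ∧ ¬ ∃ j, (7/4 : ℝ) ≤
            ∫ x, ((g p.1 ω' - g p.2 ω' : Lp ℝ 1 m)) x * (H j) x ∂m) := by
        intro p ω'
        by_cases hh : ∃ j, (7/4 : ℝ) ≤
          ∫ x, ((g p.1 ω' - g p.2 ω' : Lp ℝ 1 m)) x * (H j) x ∂m
        · exact ⟨hh.choose, Or.inl hh.choose_spec⟩
        · exact ⟨0, Or.inr ⟨rfl, hh⟩⟩
      set GG : Fin r × Fin r → Ω → Lp ℝ ⊤ m :=
        fun p ω' => H (Nat.find (hQ'ex p ω')) with hGGdef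
      have hQmeas : ∀ (p : Fin r × Fin r) (k : ℕ), MeasurableSet
          {ω' | (7/4 : ℝ) ≤ ∫ x, ((g p.1 ω' - g p.2 ω' : Lp ℝ 1 m)) x * (H k) x ∂m} := by
        intro p k
        have hsm : StronglyMeasurable
            (fun ω' => ∫ x, ((g p.1 ω' - g p.2 ω' : Lp ℝ 1 m)) x * (H k) x ∂m) :=
          (pairing_continuous (H k)).comp_stronglyMeasurable ((hgmeas p.1).sub (hgmeas p.2))
        exact measurableSet_le measurable_const hsm.measurable
      have hGGmeas : ∀ p, StronglyMeasurable (GG p) := by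
        intro p
        have hfind : Measurable (fun ω' => Nat.find (hQ'ex p ω')) := by
          refine measurable_find (hQ'ex p) fun k => ?_
          by_cases hk : k = 0
          · subst hk
            have heq : {ω' | ((7/4 : ℝ) ≤
                ∫ x, ((g p.1 ω' - g p.2 ω' : Lp ℝ 1 m)) x * (H 0) x ∂m) ∨
                ((0:ℕ) = 0 ∧ ¬ ∃ j, (7/4 : ℝ) ≤
                  ∫ x, ((g p.1 ω' - g p.2 ω' : Lp ℝ 1 m)) x * (H j) x ∂m)}
                = {ω' | (7/4 : ℝ) ≤
                    ∫ x, ((g p.1 ω' - g p.2 ω' : Lp ℝ 1 m)) x * (H 0) x ∂m} ∪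
                  (⋃ j, {ω' | (7/4 : ℝ) ≤
                    ∫ x, ((g p.1 ω' - g p.2 ω' : Lp ℝ 1 m)) x * (H j) x ∂m})ᶜ := by
              ext ω'; simp [Set.mem_union, Set.mem_iUnion]
            rw [heq]
            exact (hQmeas p 0).union (MeasurableSet.iUnion fun j => hQmeas p j).compl
          · have heq : {ω' | ((7/4 : ℝ) ≤
                ∫ x, ((g p.1 ω' - g p.2 ω' : Lp ℝ 1 m)) x * (H k) x ∂m) ∨
                (k = 0 ∧ ¬ ∃ j, (7/4 : ℝ) ≤
                  ∫ x, ((g p.1 ω' - g p.2 ω' : Lp ℝ 1 m)) x * (H j) x ∂m)}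
                = {ω' | (7/4 : ℝ) ≤
                    ∫ x, ((g p.1 ω' - g p.2 ω' : Lp ℝ 1 m)) x * (H k) x ∂m} := by
              ext ω'; simp [hk]
            rw [heq]; exact hQmeas p k
        exact (continuous_of_discreteTopology (f := H)).comp_stronglyMeasurable
          hfind.stronglyMeasurable
      have hGGbd : ∀ p ω', ‖GG p ω'‖ ≤ 1 := fun p ω' => (hHspec _).1
      have hGGspec : ∀ (p : Fin r × Fin r) (ω' : Ω), p.1 ≠ p.2 →
          (∀ i, 0 ≤ g i ω' ∧ ∫ x, (g i ω') x ∂m = 1) →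
          (∀ i j, i ≠ j → g i ω' ⊓ g j ω' = 0) →
          (7/4 : ℝ) ≤ ∫ x, ((g p.1 ω' - g p.2 ω' : Lp ℝ 1 m)) x * (GG p ω') x ∂m := by
        intro p ω' hp hdd hjj
        have hexk : ∃ k, (7/4 : ℝ) ≤
            ∫ x, ((g p.1 ω' - g p.2 ω' : Lp ℝ 1 m)) x * (H k) x ∂m := by
          refine hsel _ (Set.mem_iUnion.2 ⟨p, ⟨ω', rfl⟩⟩) ?_
          exact disjoint_diff_norm (hdd p.1).1 (hdd p.2).1 (hdd p.1).2 (hdd p.2).2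
            (hjj _ _ hp)
        rcases Nat.find_spec (hQ'ex p ω') with hq | ⟨-, hno⟩
        · exact hq
        · exact absurd hexk hno
      -- Step 4: apply posterior mixing and derive a contradiction
      have hmix : ∀ᵐ ω ∂Pr, ∀ p : Fin r × Fin r,
          Tendsto (fun n => ∫ x, (coc P σ n ω fh) x * (GG p (σ^[n] ω)) x ∂m)
            atTop (𝓝 0) := by
        rw [ae_all_iff]
        intro p
        exact h3 fh hfhint (GG p) (hGGmeas p) ⟨1, hGGbd p⟩
      obtain ⟨ω, hωA, hωmix, hωDO, hωJO, hωPO, hωMO⟩ :=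
        hnonempty A hA (hmix.and (hDO.and (hJO.and (hPO.and hMO))))
      have hkey : ∀ n : ℕ, (1:ℝ) ≤ ∑ p : Fin r × Fin r,
          |∫ x, (coc P σ n ω fh) x * (GG p (σ^[n] ω)) x ∂m| := by
        intro n
        set pn : Fin r × Fin r := (coc ρ σ n ω i0, coc ρ σ n ω i1) with hpn
        have hpnne : pn.1 ≠ pn.2 := (coc ρ σ n ω).injective.ne hne
        have hJ := hGGspec pn (σ^[n] ω) hpnne (hωDO n) (hωJO n)
        have hdiff : ‖coc P σ n ω fh - (g pn.1 (σ^[n] ω) - g pn.2 (σ^[n] ω))‖ ≤ 1/20 := by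
          have h1 : coc P σ n ω (g i0 ω - g i1 ω)
              = g pn.1 (σ^[n] ω) - g pn.2 (σ^[n] ω) := by
            rw [map_sub, coc_g ω hωPO n i0, coc_g ω hωPO n i1]
          rw [← h1, ← map_sub]
          exact (coc_norm_le ω hωMO n _).trans (herr ω hωA)
        have hIJ : |(∫ x, (coc P σ n ω fh) x * (GG pn (σ^[n] ω)) x ∂m) -
            ∫ x, ((g pn.1 (σ^[n] ω) - g pn.2 (σ^[n] ω) : Lp ℝ 1 m)) x *
              (GG pn (σ^[n] ω)) x ∂m| ≤ 1/20 := by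
          rw [← pairing_sub]
          refine (pairing_bound _ _).trans ?_
          calc ‖GG pn (σ^[n] ω)‖ * ‖coc P σ n ω fh - (g pn.1 (σ^[n] ω) - g pn.2 (σ^[n] ω))‖
              ≤ 1 * (1/20) :=
                mul_le_mul (hGGbd _ _) hdiff (norm_nonneg _) zero_le_one
            _ = 1/20 := by norm_num
        have hI : (1:ℝ) ≤ |∫ x, (coc P σ n ω fh) x * (GG pn (σ^[n] ω)) x ∂m| := by
          have h5 := abs_le.1 hIJ
          refine le_trans ?_ (le_abs_self _)
          linarith [h5.1, h5.2]
        refine hI.trans ?_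
        exact Finset.single_le_sum
          (f := fun p => |∫ x, (coc P σ n ω fh) x * (GG p (σ^[n] ω)) x ∂m|)
          (fun p _ => abs_nonneg _) (Finset.mem_univ pn)
      have hsum0 : Tendsto (fun n => ∑ p : Fin r × Fin r,
          |∫ x, (coc P σ n ω fh) x * (GG p (σ^[n] ω)) x ∂m|) atTop (𝓝 0) := by
        have h6 := tendsto_finset_sum (Finset.univ : Finset (Fin r × Fin r))
          (fun p _ => (hωmix p).abs)
        simpa using h6
      have hfin := ge_of_tendsto' hsum0 hkey
      linarith
    have n2 : ¬ StmtPrior m Pr σ P := fun h => n3 (prior_implies_post h)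
    exact ⟨iff_of_false n1 n2, iff_of_false n2 n3, iff_of_false n3 n4⟩
end
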